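/- Let T_n follow a t-distribution with n degrees of freedom. Then for every t > 0, P(T_n² > n(e^{2t²/(n−1)} − 1)) ≤ (1 + ε_n) e^{−t²}/(π^{1/2} t), where ε_n → 0 as n → ∞ and ε_n depends only on n. -/

import Mathlib

open MeasureTheory ProbabilityTheory Real Filter

open Set

lemma sz_integral_Ioi (u : ℝ) :
    ∫ z in Set.Ioi u, z * Real.exp (-z ^ 2 / 2) = Real.exp (-u ^ 2 / 2) := by
  have h : ∀ x ∈ Set.Ici u, HasDerivAt (fun z : ℝ => -Real.exp (-z ^ 2 / 2))
      (x * Real.exp (-x ^ 2 / 2)) x := by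
    intro x _
    have h1 : HasDerivAt (fun z : ℝ => -z ^ 2 / 2) (-x) x := by
      have := (hasDerivAt_pow 2 x).neg.div_const 2
      exact this.congr_deriv (by norm_num; ring)
    have := h1.exp.neg
    simpa [mul_comm, Pi.neg_def] using this
  have heq : (fun x : ℝ => x * Real.exp (-x ^ 2 / 2))
      = fun x => x * Real.exp (-(1/2) * x ^ 2) := by funext x; ring_nf
  have hint : MeasureTheory.IntegrableOn (fun x : ℝ => x * Real.exp (-x ^ 2 / 2))
      (Set.Ioi u) := by
    rw [heq]
    exact (integrable_mul_exp_neg_mul_sq (by norm_num : (0:ℝ) < 1/2)).integrableOn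
  have htend : Tendsto (fun z : ℝ => -Real.exp (-z ^ 2 / 2)) atTop (nhds 0) := by
    rw [show (0:ℝ) = -0 by ring]
    refine Tendsto.neg ?_
    refine Real.tendsto_exp_atBot.comp ?_
    have : Tendsto (fun z : ℝ => z ^ 2) atTop atTop := tendsto_pow_atTop two_ne_zero
    exact (tendsto_neg_atBot_iff.mpr this).atBot_div_const (by norm_num)
  have := MeasureTheory.integral_Ioi_of_hasDerivAt_of_tendsto' h hint htend
  rw [this]; ring

lemma sz_gauss_tail {u : ℝ} (hu : 0 < u) :
    (gaussianReal 0 1) {z | u < |z|} ≤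
      ENNReal.ofReal (2 * (Real.sqrt (2 * π))⁻¹ * Real.exp (-u ^ 2 / 2) / u) := by
  set c : ℝ := (Real.sqrt (2 * π))⁻¹ with hc
  have hφ : ∀ z : ℝ, gaussianPDFReal 0 1 z = c * Real.exp (-z ^ 2 / 2) := by
    intro z
    simp [gaussianPDFReal, hc]
  have hset : {z : ℝ | u < |z|} = Set.Iio (-u) ∪ Set.Ioi u := by
    ext z
    simp only [Set.mem_setOf_eq, lt_abs, Set.mem_union, Set.mem_Iio, Set.mem_Ioi]
    constructor
    · rintro (h | h)
      · right; exact h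
      · left; linarith
    · rintro (h | h)
      · right; linarith
      · left; exact h
  rw [hset, gaussianReal_apply_eq_integral _ one_ne_zero _]
  refine ENNReal.ofReal_le_ofReal ?_
  have hdisj : Disjoint (Set.Iio (-u)) (Set.Ioi u) := by
    refine Set.disjoint_left.mpr fun z hz hz' => ?_
    simp only [Set.mem_Iio, Set.mem_Ioi] at hz hz'
    linarith
  have hint : Integrable (gaussianPDFReal 0 1) := integrable_gaussianPDFReal 0 1
  rw [setIntegral_union hdisj measurableSet_Ioi hint.integrableOn hint.integrableOn]
  have hrefl : ∫ z in Set.Iio (-u), gaussianPDFReal 0 1 z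
      = ∫ z in Set.Ioi u, gaussianPDFReal 0 1 z := by
    rw [← MeasureTheory.integral_Iic_eq_integral_Iio, ← integral_comp_neg_Ioi]
    refine setIntegral_congr_fun measurableSet_Ioi fun z _ => ?_
    rw [hφ, hφ]
    ring_nf
  have hintg : MeasureTheory.IntegrableOn (fun z : ℝ => c / u * (z * Real.exp (-z ^ 2 / 2)))
      (Set.Ioi u) := by
    have heq : (fun x : ℝ => x * Real.exp (-x ^ 2 / 2))
        = fun x => x * Real.exp (-(1/2) * x ^ 2) := by funext x; ring_nf
    refine Integrable.const_mul ?_ _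
    rw [heq]
    exact (integrable_mul_exp_neg_mul_sq (by norm_num : (0:ℝ) < 1/2)).integrableOn
  have hbound : ∫ z in Set.Ioi u, gaussianPDFReal 0 1 z
      ≤ c / u * Real.exp (-u ^ 2 / 2) := by
    have h1 : ∫ z in Set.Ioi u, gaussianPDFReal 0 1 z
        ≤ ∫ z in Set.Ioi u, c / u * (z * Real.exp (-z ^ 2 / 2)) := by
      refine setIntegral_mono_on hint.integrableOn hintg measurableSet_Ioi fun z hz => ?_
      rw [hφ]
      have hz' : u < z := hz
      have hc0 : 0 ≤ c := by positivity
      have he : 0 < Real.exp (-z ^ 2 / 2) := Real.exp_pos _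
      rw [div_mul_eq_mul_div, le_div_iff₀ hu]
      nlinarith [mul_nonneg hc0 he.le]
    calc ∫ z in Set.Ioi u, gaussianPDFReal 0 1 z
        ≤ ∫ z in Set.Ioi u, c / u * (z * Real.exp (-z ^ 2 / 2)) := h1
      _ = c / u * ∫ z in Set.Ioi u, z * Real.exp (-z ^ 2 / 2) := by
          rw [integral_const_mul]
      _ = c / u * Real.exp (-u ^ 2 / 2) := by rw [sz_integral_Ioi]
  rw [hrefl]
  calc (∫ z in Set.Ioi u, gaussianPDFReal 0 1 z) + ∫ z in Set.Ioi u, gaussianPDFReal 0 1 z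
      ≤ c / u * Real.exp (-u ^ 2 / 2) + c / u * Real.exp (-u ^ 2 / 2) := by
        exact add_le_add hbound hbound
    _ = 2 * c * Real.exp (-u ^ 2 / 2) / u := by ring

lemma sz_gamma_midpoint {x y : ℝ} (hx : 0 < x) (hy : 0 < y) :
    Real.Gamma ((x + y) / 2) ≤ Real.sqrt (Real.Gamma x * Real.Gamma y) := by
  have h := Real.convexOn_log_Gamma.2 (Set.mem_Ioi.mpr hx) (Set.mem_Ioi.mpr hy)
    (by norm_num : (0:ℝ) ≤ 1/2) (by norm_num : (0:ℝ) ≤ 1/2) (by norm_num)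
  simp only [Function.comp_apply, smul_eq_mul] at h
  have hmid : (1:ℝ)/2 * x + 1/2 * y = (x + y)/2 := by ring
  rw [hmid] at h
  have hpos : 0 < Real.Gamma ((x + y)/2) := Real.Gamma_pos_of_pos (by linarith)
  have hx' : 0 < Real.Gamma x := Real.Gamma_pos_of_pos hx
  have hy' : 0 < Real.Gamma y := Real.Gamma_pos_of_pos hy
  calc Real.Gamma ((x + y)/2) = Real.exp (Real.log (Real.Gamma ((x + y)/2))) :=
        (Real.exp_log hpos).symm
    _ ≤ Real.exp (1/2 * Real.log (Real.Gamma x) + 1/2 * Real.log (Real.Gamma y)) :=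
        Real.exp_le_exp.mpr h
    _ = Real.sqrt (Real.Gamma x * Real.Gamma y) := by
        rw [show (1:ℝ)/2 * Real.log (Real.Gamma x) + 1/2 * Real.log (Real.Gamma y)
          = (Real.log (Real.Gamma x) + Real.log (Real.Gamma y)) / 2 by ring,
          Real.exp_half, Real.exp_add, Real.exp_log hx', Real.exp_log hy']

lemma sz_gautschi_low {x : ℝ} (hx : 0 < x) :
    Real.Gamma (x + 1/2) ≤ Real.sqrt x * Real.Gamma x := by
  have h := sz_gamma_midpoint hx (by linarith : (0:ℝ) < x + 1)
  rw [show (x + (x + 1))/2 = x + 1/2 by ring] at h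
  rw [Real.Gamma_add_one hx.ne'] at h
  calc Real.Gamma (x + 1/2) ≤ Real.sqrt (Real.Gamma x * (x * Real.Gamma x)) := h
    _ = Real.sqrt x * Real.Gamma x := by
        rw [show Real.Gamma x * (x * Real.Gamma x) = x * Real.Gamma x ^ 2 by ring,
          Real.sqrt_mul hx.le, Real.sqrt_sq (Real.Gamma_pos_of_pos hx).le]

lemma sz_gautschi_high {x : ℝ} (hx : 1/2 < x) :
    Real.sqrt x * Real.Gamma x ≤ Real.sqrt (x / (x - 1/2)) * Real.Gamma (x + 1/2) := by
  have hx0 : 0 < x := by linarith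
  have hx2 : 0 < x - 1/2 := by linarith
  have h := sz_gamma_midpoint hx2 (by linarith : (0:ℝ) < x + 1/2)
  rw [show (x - 1/2 + (x + 1/2))/2 = x by ring] at h
  have hrec : Real.Gamma (x + 1/2) = (x - 1/2) * Real.Gamma (x - 1/2) := by
    have := Real.Gamma_add_one hx2.ne'
    rw [show x - 1/2 + 1 = x + 1/2 by ring] at this
    exact this
  have hG : 0 < Real.Gamma (x + 1/2) := Real.Gamma_pos_of_pos (by linarith)
  have hG2 : 0 < Real.Gamma (x - 1/2) := Real.Gamma_pos_of_pos hx2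
  have h2 : Real.Gamma x ≤ Real.Gamma (x + 1/2) / Real.sqrt (x - 1/2) := by
    have : Real.Gamma (x - 1/2) * Real.Gamma (x + 1/2)
        = (Real.Gamma (x + 1/2) / Real.sqrt (x - 1/2)) ^ 2 := by
      rw [div_pow, Real.sq_sqrt hx2.le, hrec, eq_div_iff hx2.ne']
      ring
    rw [this, Real.sqrt_sq (by positivity)] at h
    exact h
  calc Real.sqrt x * Real.Gamma x ≤ Real.sqrt x * (Real.Gamma (x + 1/2) / Real.sqrt (x - 1/2)) :=
        mul_le_mul_of_nonneg_left h2 (Real.sqrt_nonneg x)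
    _ = Real.sqrt (x / (x - 1/2)) * Real.Gamma (x + 1/2) := by
        rw [Real.sqrt_div hx0.le]
        ring

noncomputable def szEps (n : ℕ) : ℝ :=
  Real.sqrt (((n:ℝ) - 1) / 2) * Real.Gamma (((n:ℝ) - 1) / 2) / Real.Gamma ((n:ℝ) / 2) - 1

lemma szEps_nonneg {n : ℕ} (hn : 2 ≤ n) : 0 ≤ szEps n := by
  have hn' : (2:ℝ) ≤ n := by exact_mod_cast hn
  set x : ℝ := ((n:ℝ) - 1) / 2 with hxdef
  have hx : 0 < x := by rw [hxdef]; linarith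
  have hkey : Real.Gamma (x + 1/2) ≤ Real.sqrt x * Real.Gamma x := sz_gautschi_low hx
  have hhalf : (n:ℝ)/2 = x + 1/2 := by rw [hxdef]; ring
  have hG : 0 < Real.Gamma (x + 1/2) := Real.Gamma_pos_of_pos (by linarith)
  rw [szEps, hhalf, sub_nonneg, le_div_iff₀ hG, one_mul]
  exact hkey

lemma szEps_le {n : ℕ} (hn : 3 ≤ n) :
    szEps n ≤ Real.sqrt (((n:ℝ) - 1) / ((n:ℝ) - 2)) - 1 := by
  have hn' : (3:ℝ) ≤ n := by exact_mod_cast hn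
  set x : ℝ := ((n:ℝ) - 1) / 2 with hxdef
  have hx : 1/2 < x := by rw [hxdef]; linarith
  have hkey := sz_gautschi_high hx
  have hhalf : (n:ℝ)/2 = x + 1/2 := by rw [hxdef]; ring
  have hG : 0 < Real.Gamma (x + 1/2) := Real.Gamma_pos_of_pos (by linarith)
  have hq : x / (x - 1/2) = ((n:ℝ) - 1) / ((n:ℝ) - 2) := by
    have h2 : ((n:ℝ) - 2) ≠ 0 := by linarith
    have h3 : ((n:ℝ) - 1)/2 - 1/2 ≠ 0 := by
      intro h; apply h2; linarith
    rw [hxdef, div_eq_div_iff h3 h2]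
    ring
  rw [szEps, hhalf, sub_le_sub_iff_right, div_le_iff₀ hG, ← hq]
  exact hkey

lemma szEps_tendsto : Tendsto szEps atTop (nhds 0) := by
  have hupper : Tendsto (fun n : ℕ => Real.sqrt (((n:ℝ) - 1) / ((n:ℝ) - 2)) - 1)
      atTop (nhds 0) := by
    have h1 : Tendsto (fun n : ℕ => ((n:ℝ) - 1) / ((n:ℝ) - 2)) atTop (nhds 1) := by
      have h2 : Tendsto (fun n : ℕ => (n:ℝ) - 2) atTop atTop :=
        tendsto_atTop_add_const_right _ _ tendsto_natCast_atTop_atTop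
      have h3 : Tendsto (fun n : ℕ => 1 + ((n:ℝ) - 2)⁻¹) atTop (nhds 1) := by
        simpa using tendsto_const_nhds.add (h2.inv_tendsto_atTop)
      refine h3.congr' ?_
      filter_upwards [eventually_ge_atTop 3] with n hn
      have h5 : (3:ℝ) ≤ n := by exact_mod_cast hn
      have hne : (n:ℝ) - 2 ≠ 0 := by linarith
      field_simp
      ring
    have h4 : Tendsto (fun n : ℕ => Real.sqrt (((n:ℝ) - 1) / ((n:ℝ) - 2))) atTop (nhds 1) := by
      have := (Real.continuous_sqrt.tendsto 1).comp h1
      simpa [Function.comp_def] using this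
    simpa using h4.sub_const 1
  refine tendsto_of_tendsto_of_tendsto_of_le_of_le' tendsto_const_nhds hupper ?_ ?_
  · filter_upwards [eventually_ge_atTop 2] with n hn using szEps_nonneg hn
  · filter_upwards [eventually_ge_atTop 3] with n hn using szEps_le hn

lemma sz_section_bound {n : ℕ} (hn : 2 ≤ n) {a : ℝ} (ha : 0 < a) (x : ℝ) :
    (gaussianReal 0 1) {z | (n : ℝ) * a < (z / Real.sqrt (x / n)) ^ 2} ≤
      ENNReal.ofReal (if 0 < x then
        2 * (Real.sqrt (2 * π))⁻¹ * Real.exp (-(a * x) / 2) / Real.sqrt (a * x) else 0) := by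
  have hn0 : (0:ℝ) < n := by
    have : (2:ℝ) ≤ n := by exact_mod_cast hn
    linarith
  by_cases hx : 0 < x
  · rw [if_pos hx]
    have hax : 0 < a * x := mul_pos ha hx
    have hsub : {z : ℝ | (n : ℝ) * a < (z / Real.sqrt (x / n)) ^ 2}
        ⊆ {z : ℝ | Real.sqrt (a * x) < |z|} := by
      intro z hz
      simp only [Set.mem_setOf_eq] at hz ⊢
      have hs : Real.sqrt (x / n) ^ 2 = x / n := Real.sq_sqrt (by positivity)
      rw [div_pow, hs] at hz
      have hxn : (0:ℝ) < x / n := by positivity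
      rw [lt_div_iff₀ hxn] at hz
      have h1 : a * x < z ^ 2 := by
        have h2 : (n:ℝ) * a * (x / n) = a * x := by field_simp
        linarith [h2 ▸ hz]
      calc Real.sqrt (a * x) < Real.sqrt (z ^ 2) := Real.sqrt_lt_sqrt hax.le h1
        _ = |z| := Real.sqrt_sq_eq_abs z
    refine le_trans (measure_mono hsub) ?_
    have h3 := sz_gauss_tail (Real.sqrt_pos.mpr hax)
    rwa [Real.sq_sqrt hax.le] at h3
  · rw [if_neg hx]
    push_neg at hx
    have hempty : {z : ℝ | (n : ℝ) * a < (z / Real.sqrt (x / n)) ^ 2} = ∅ := by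
      ext z
      simp only [Set.mem_setOf_eq, Set.mem_empty_iff_false, iff_false, not_lt]
      rw [Real.sqrt_eq_zero'.mpr (by exact div_nonpos_of_nonpos_of_nonneg hx hn0.le), div_zero]
      simpa using (mul_pos hn0 ha).le
    rw [hempty]
    simp

lemma sz_pointwise {n : ℕ} (hn : 2 ≤ n) {a : ℝ} (ha : 0 < a) (x : ℝ) :
    (if 0 < x then
        2 * (Real.sqrt (2 * π))⁻¹ * Real.exp (-(a * x) / 2) / Real.sqrt (a * x) else 0)
      * gammaPDFReal ((n:ℝ)/2) (1/2) x
    ≤ (2 * (Real.sqrt (2 * π))⁻¹ / Real.sqrt a * (((1:ℝ)/2) ^ ((n:ℝ)/2) / Real.Gamma ((n:ℝ)/2))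
        * (Real.Gamma (((n:ℝ)-1)/2) / (((1+a)/2) ^ (((n:ℝ)-1)/2))))
      * gammaPDFReal (((n:ℝ)-1)/2) ((1+a)/2) x := by
  have hn' : (2:ℝ) ≤ n := by exact_mod_cast hn
  have hs1 : (0:ℝ) < (n:ℝ)/2 := by linarith
  have hs2 : (0:ℝ) < ((n:ℝ)-1)/2 := by linarith
  have hr2 : (0:ℝ) < (1+a)/2 := by linarith
  have hΓ1 : 0 < Real.Gamma ((n:ℝ)/2) := Real.Gamma_pos_of_pos hs1
  have hΓ2 : 0 < Real.Gamma (((n:ℝ)-1)/2) := Real.Gamma_pos_of_pos hs2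
  rcases le_or_gt x 0 with hx | hx
  · rw [if_neg (not_lt.mpr hx), zero_mul]
    refine mul_nonneg (mul_nonneg (mul_nonneg ?_ ?_) ?_)
      (gammaPDFReal_nonneg hs2 hr2 x)
    · positivity
    · exact div_nonneg (Real.rpow_nonneg (by norm_num) _) hΓ1.le
    · exact div_nonneg hΓ2.le (Real.rpow_nonneg hr2.le _)
  · rw [if_pos hx]
    unfold gammaPDFReal
    rw [if_pos hx.le, if_pos hx.le]
    apply le_of_eq
    have hsx : Real.sqrt (a * x) = Real.sqrt a * Real.sqrt x := Real.sqrt_mul ha.le x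
    have hrx : Real.sqrt x = x ^ ((1:ℝ)/2) := Real.sqrt_eq_rpow x
    have hxpow : x ^ ((n:ℝ)/2 - 1) = x ^ (((n:ℝ)-1)/2 - 1) * x ^ ((1:ℝ)/2) := by
      rw [← Real.rpow_add hx]; congr 1; ring
    have hexp2 : Real.exp (-(a * x) / 2) * Real.exp (-(1/2 * x)) = Real.exp (-((1+a)/2 * x)) := by
      rw [← Real.exp_add]; congr 1; ring
    rw [hsx, hrx, hxpow, ← hexp2]
    have hx12 : (0:ℝ) < x ^ ((1:ℝ)/2) := Real.rpow_pos_of_pos hx _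
    have hsa : (0:ℝ) < Real.sqrt a := Real.sqrt_pos.mpr ha
    have hpa : (0:ℝ) < ((1+a)/2) ^ (((n:ℝ)-1)/2) := Real.rpow_pos_of_pos hr2 _
    field_simp

-- the constant bound
lemma sz_const_bound {n : ℕ} (hn : 2 ≤ n) {t : ℝ} (ht : 0 < t) :
    2 * (Real.sqrt (2 * π))⁻¹ / Real.sqrt (Real.exp (2 * t ^ 2 / ((n:ℝ) - 1)) - 1)
        * (((1:ℝ)/2) ^ ((n:ℝ)/2) / Real.Gamma ((n:ℝ)/2))
        * (Real.Gamma (((n:ℝ)-1)/2)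
            / (((1 + (Real.exp (2 * t ^ 2 / ((n:ℝ) - 1)) - 1))/2) ^ (((n:ℝ)-1)/2)))
      ≤ (1 + szEps n) * Real.exp (-t ^ 2) / (Real.sqrt π * t) := by
  have hn' : (2:ℝ) ≤ n := by exact_mod_cast hn
  have hn1 : (0:ℝ) < (n:ℝ) - 1 := by linarith
  set a : ℝ := Real.exp (2 * t ^ 2 / ((n:ℝ) - 1)) - 1 with hadef
  have hea : 1 + a = Real.exp (2 * t ^ 2 / ((n:ℝ) - 1)) := by rw [hadef]; ring
  have ha : 0 < a := by
    have h1 : Real.exp 0 < Real.exp (2 * t ^ 2 / ((n:ℝ) - 1)) :=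
      Real.exp_lt_exp.mpr (div_pos (by positivity) hn1)
    rw [Real.exp_zero] at h1
    rw [hadef]; linarith
  have hΓ1 : 0 < Real.Gamma ((n:ℝ)/2) := Real.Gamma_pos_of_pos (by linarith)
  have hΓ2 : 0 < Real.Gamma (((n:ℝ)-1)/2) := Real.Gamma_pos_of_pos (by linarith)
  -- rewrite the power of (1+a)/2
  have h1 : ((1 + a)/2) ^ (((n:ℝ)-1)/2)
      = Real.exp (t ^ 2) * ((2:ℝ) ^ (((n:ℝ)-1)/2))⁻¹ := by
    rw [div_rpow (by linarith : (0:ℝ) ≤ 1 + a) (by norm_num : (0:ℝ) ≤ 2), hea,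
      ← Real.exp_mul]
    rw [show 2 * t ^ 2 / ((n:ℝ) - 1) * (((n:ℝ) - 1) / 2) = t ^ 2 by field_simp]
    rw [div_eq_mul_inv]
  have h2 : ((1:ℝ)/2) ^ ((n:ℝ)/2) * (2:ℝ) ^ (((n:ℝ)-1)/2) = (Real.sqrt 2)⁻¹ := by
    rw [div_rpow (by norm_num : (0:ℝ) ≤ 1) (by norm_num : (0:ℝ) ≤ 2), Real.one_rpow,
      div_mul_eq_mul_div, one_mul, ← Real.rpow_sub (by norm_num : (0:ℝ) < 2)]
    rw [show ((n:ℝ)-1)/2 - (n:ℝ)/2 = -(1/2) by ring, Real.rpow_neg (by norm_num),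
      ← Real.sqrt_eq_rpow]
  set P : ℝ := ((1:ℝ)/2) ^ ((n:ℝ)/2) with hPdef
  set Q : ℝ := (2:ℝ) ^ (((n:ℝ)-1)/2) with hQdef
  have hPp : 0 < P := Real.rpow_pos_of_pos (by norm_num) _
  have hQp : 0 < Q := Real.rpow_pos_of_pos (by norm_num) _
  have hs2 : Real.sqrt 2 = (P * Q)⁻¹ := by rw [h2, inv_inv]
  have h2π : Real.sqrt (2 * π) = Real.sqrt 2 * Real.sqrt π :=
    Real.sqrt_mul (by norm_num) π
  have hE : (0:ℝ) < Real.exp (t ^ 2) := Real.exp_pos _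
  have hπ : (0:ℝ) < Real.sqrt π := Real.sqrt_pos.mpr Real.pi_pos
  have hsa : (0:ℝ) < Real.sqrt a := Real.sqrt_pos.mpr ha
  have hw : (0:ℝ) < ((n:ℝ)-1)/2 := by linarith
  have hsw : (0:ℝ) < Real.sqrt (((n:ℝ)-1)/2) := Real.sqrt_pos.mpr hw
  have hL : 2 * (Real.sqrt (2 * π))⁻¹ / Real.sqrt a * (P / Real.Gamma ((n:ℝ)/2))
        * (Real.Gamma (((n:ℝ)-1)/2) / (((1 + a)/2) ^ (((n:ℝ)-1)/2)))
      = (Real.sqrt π)⁻¹ * (Real.Gamma (((n:ℝ)-1)/2) / Real.Gamma ((n:ℝ)/2))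
          * Real.exp (-t ^ 2) * (Real.sqrt a)⁻¹ := by
    have key : 2 * (Real.sqrt (2 * π))⁻¹ * (P * Q) = (Real.sqrt π)⁻¹ := by
      rw [h2, h2π, mul_inv]
      have hss : Real.sqrt 2 * Real.sqrt 2 = 2 := Real.mul_self_sqrt (by norm_num)
      have hs2p : (0:ℝ) < Real.sqrt 2 := Real.sqrt_pos.mpr (by norm_num)
      field_simp
      linear_combination -hss
    rw [h1, Real.exp_neg, ← key]
    field_simp
  have hinv : (Real.sqrt a)⁻¹ ≤ Real.sqrt (((n:ℝ)-1)/2) / t := by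
    have hage : 2 * t ^ 2 / ((n:ℝ) - 1) ≤ a := by
      have h7 := Real.add_one_le_exp (2 * t ^ 2 / ((n:ℝ) - 1))
      rw [hadef]; linarith
    have h5 : Real.sqrt (2 * t ^ 2 / ((n:ℝ) - 1)) ≤ Real.sqrt a := Real.sqrt_le_sqrt hage
    have h6 : Real.sqrt (2 * t ^ 2 / ((n:ℝ) - 1)) = t / Real.sqrt (((n:ℝ)-1)/2) := by
      rw [show 2 * t ^ 2 / ((n:ℝ) - 1) = t ^ 2 / (((n:ℝ)-1)/2) by field_simp,
        Real.sqrt_div (sq_nonneg t), Real.sqrt_sq ht.le]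
    rw [h6] at h5
    have h8 : (Real.sqrt a)⁻¹ ≤ (t / Real.sqrt (((n:ℝ)-1)/2))⁻¹ := by
      apply inv_anti₀ (by positivity) h5
    rwa [inv_div] at h8
  rw [hL]
  have heps : 1 + szEps n
      = Real.sqrt (((n:ℝ)-1)/2) * Real.Gamma (((n:ℝ)-1)/2) / Real.Gamma ((n:ℝ)/2) := by
    rw [szEps]; ring
  rw [heps]
  have hA : (0:ℝ) ≤ (Real.sqrt π)⁻¹ * (Real.Gamma (((n:ℝ)-1)/2) / Real.Gamma ((n:ℝ)/2))
      * Real.exp (-t ^ 2) := by positivity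
  calc (Real.sqrt π)⁻¹ * (Real.Gamma (((n:ℝ)-1)/2) / Real.Gamma ((n:ℝ)/2))
        * Real.exp (-t ^ 2) * (Real.sqrt a)⁻¹
      ≤ (Real.sqrt π)⁻¹ * (Real.Gamma (((n:ℝ)-1)/2) / Real.Gamma ((n:ℝ)/2))
        * Real.exp (-t ^ 2) * (Real.sqrt (((n:ℝ)-1)/2) / t) :=
        mul_le_mul_of_nonneg_left hinv hA
    _ = Real.sqrt (((n:ℝ)-1)/2) * Real.Gamma (((n:ℝ)-1)/2) / Real.Gamma ((n:ℝ)/2)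
        * Real.exp (-t ^ 2) / (Real.sqrt π * t) := by
        field_simp

/-- Tail bound for the Student t-distribution (Sun–Zhang): if `T_n = Z/√(χ²_n/n)`
with `Z ~ N(0,1)` independent of a chi-squared variable with `n` degrees of
freedom (a Gamma(n/2, 1/2) variable), then
`P(T_n² > n(e^{2t²/(n−1)} − 1)) ≤ (1+ε_n) e^{−t²}/(√π t)` where `ε_n → 0`. -/

theorem studentT_square_tail_bound :
    ∃ ε : ℕ → ℝ, Tendsto ε atTop (nhds 0) ∧
      ∀ (n : ℕ), 2 ≤ n →
      ∀ (Ω : Type) (_ : MeasurableSpace Ω) (μ : Measure Ω), IsProbabilityMeasure μ →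
      ∀ Z X : Ω → ℝ,
      Measure.map Z μ = gaussianReal 0 1 →
      Measure.map X μ = gammaMeasure ((n : ℝ) / 2) (1 / 2) →
      IndepFun Z X μ →
      ∀ t : ℝ, 0 < t →
      (μ {ω | (n : ℝ) * (Real.exp (2 * t ^ 2 / ((n : ℝ) - 1)) - 1)
            < (Z ω / Real.sqrt (X ω / n)) ^ 2}).toReal
        ≤ (1 + ε n) * Real.exp (-t ^ 2) / (Real.sqrt π * t) := by
  refine ⟨szEps, szEps_tendsto, ?_⟩
  intro n hn Ω mΩ μ hμ Z X hZ hX hind t ht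
  have hn' : (2:ℝ) ≤ n := by exact_mod_cast hn
  have hn1 : (0:ℝ) < (n:ℝ) - 1 := by linarith
  have hs1 : (0:ℝ) < (n:ℝ)/2 := by linarith
  have hs2 : (0:ℝ) < ((n:ℝ)-1)/2 := by linarith
  set a : ℝ := Real.exp (2 * t ^ 2 / ((n:ℝ) - 1)) - 1 with hadef
  have ha : 0 < a := by
    have h1 : Real.exp 0 < Real.exp (2 * t ^ 2 / ((n:ℝ) - 1)) :=
      Real.exp_lt_exp.mpr (div_pos (by positivity) hn1)
    rw [Real.exp_zero] at h1
    rw [hadef]; linarith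
  clear_value a
  haveI hPG : IsProbabilityMeasure (gammaMeasure ((n:ℝ)/2) (1/2)) :=
    isProbabilityMeasure_gammaMeasure hs1 (by norm_num)
  -- AEMeasurable
  have hZm : AEMeasurable Z μ := by
    by_contra h
    rw [Measure.map_of_not_aemeasurable h] at hZ
    exact IsProbabilityMeasure.ne_zero (gaussianReal 0 1) hZ.symm
  have hXm : AEMeasurable X μ := by
    by_contra h
    rw [Measure.map_of_not_aemeasurable h] at hX
    exact IsProbabilityMeasure.ne_zero (gammaMeasure ((n:ℝ)/2) (1/2)) hX.symm
  have hpair : Measure.map (fun ω => (X ω, Z ω)) μ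
      = (gammaMeasure ((n:ℝ)/2) (1/2)).prod (gaussianReal 0 1) := by
    rw [← hX, ← hZ]
    exact (indepFun_iff_map_prod_eq_prod_map_map hXm hZm).mp hind.symm
  have hS : MeasurableSet {p : ℝ × ℝ | (n:ℝ) * a < (p.2 / Real.sqrt (p.1 / n)) ^ 2} := by
    apply measurableSet_lt measurable_const
    exact (measurable_snd.div (measurable_fst.div_const _).sqrt).pow_const 2
  have hμev : μ {ω | (n:ℝ) * a < (Z ω / Real.sqrt (X ω / n)) ^ 2}
      = ((gammaMeasure ((n:ℝ)/2) (1/2)).prod (gaussianReal 0 1))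
          {p : ℝ × ℝ | (n:ℝ) * a < (p.2 / Real.sqrt (p.1 / n)) ^ 2} := by
    rw [← hpair, Measure.map_apply_of_aemeasurable (hXm.prodMk hZm) hS]
    rfl
  have hΓ1 : 0 < Real.Gamma ((n:ℝ)/2) := Real.Gamma_pos_of_pos hs1
  have hΓ2 : 0 < Real.Gamma (((n:ℝ)-1)/2) := Real.Gamma_pos_of_pos hs2
  have hgm1 : Measurable (gammaPDF ((n:ℝ)/2) (1/2)) :=
    (measurable_gammaPDFReal _ _).ennreal_ofReal
  have hgm2 : Measurable (gammaPDF (((n:ℝ)-1)/2) ((1+a)/2)) :=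
    (measurable_gammaPDFReal _ _).ennreal_ofReal
  set C : ℝ := 2 * (Real.sqrt (2 * π))⁻¹ / Real.sqrt a
      * (((1:ℝ)/2) ^ ((n:ℝ)/2) / Real.Gamma ((n:ℝ)/2))
      * (Real.Gamma (((n:ℝ)-1)/2) / (((1+a)/2) ^ (((n:ℝ)-1)/2))) with hCdef
  have h0C : 0 ≤ C := by
    rw [hCdef]
    refine mul_nonneg (mul_nonneg (by positivity) ?_) ?_
    · exact div_nonneg (Real.rpow_nonneg (by norm_num) _) hΓ1.le
    · exact div_nonneg hΓ2.le (Real.rpow_nonneg (by linarith) _)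
  have hg : Measurable (fun x : ℝ => ENNReal.ofReal (if 0 < x then
      2 * (Real.sqrt (2 * π))⁻¹ * Real.exp (-(a * x) / 2) / Real.sqrt (a * x) else 0)) := by
    refine ENNReal.measurable_ofReal.comp ?_
    refine Measurable.ite measurableSet_Ioi ?_ measurable_const
    exact ((measurable_const.mul ((measurable_id.const_mul a).neg.div_const 2).exp).div
      (measurable_id.const_mul a).sqrt)
  have hchain : ((gammaMeasure ((n:ℝ)/2) (1/2)).prod (gaussianReal 0 1))
      {p : ℝ × ℝ | (n:ℝ) * a < (p.2 / Real.sqrt (p.1 / n)) ^ 2} ≤ ENNReal.ofReal C := by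
    rw [Measure.prod_apply hS]
    have step1 : ∫⁻ x, (gaussianReal 0 1)
          (Prod.mk x ⁻¹' {p : ℝ × ℝ | (n:ℝ) * a < (p.2 / Real.sqrt (p.1 / n)) ^ 2})
          ∂(gammaMeasure ((n:ℝ)/2) (1/2))
        ≤ ∫⁻ x, ENNReal.ofReal (if 0 < x then
            2 * (Real.sqrt (2 * π))⁻¹ * Real.exp (-(a * x) / 2) / Real.sqrt (a * x) else 0)
          ∂(gammaMeasure ((n:ℝ)/2) (1/2)) := by
      refine lintegral_mono fun x => ?_
      have := sz_section_bound hn ha x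
      convert this using 2
      rfl
    refine le_trans step1 ?_
    rw [gammaMeasure, lintegral_withDensity_eq_lintegral_mul _
      hgm1 hg]
    have step2 : ∫⁻ x, (gammaPDF ((n:ℝ)/2) (1/2) * fun x => ENNReal.ofReal (if 0 < x then
          2 * (Real.sqrt (2 * π))⁻¹ * Real.exp (-(a * x) / 2) / Real.sqrt (a * x) else 0)) x
        ≤ ∫⁻ x, ENNReal.ofReal C * gammaPDF (((n:ℝ)-1)/2) ((1+a)/2) x := by
      refine lintegral_mono fun x => ?_
      simp only [Pi.mul_apply, gammaPDF]
      rw [← ENNReal.ofReal_mul (gammaPDFReal_nonneg hs1 (by norm_num) x),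
        ← ENNReal.ofReal_mul]
      · refine ENNReal.ofReal_le_ofReal ?_
        rw [mul_comm]
        exact sz_pointwise hn ha x
      · exact h0C
    refine le_trans step2 ?_
    rw [lintegral_const_mul _ hgm2,
      lintegral_gammaPDF_eq_one hs2 (by linarith : (0:ℝ) < (1+a)/2), mul_one]
  have hRHS : 0 ≤ (1 + szEps n) * Real.exp (-t ^ 2) / (Real.sqrt π * t) := by
    have h9 : 0 < 1 + szEps n := by
      rw [szEps]
      have h10 : 0 < Real.sqrt (((n:ℝ) - 1) / 2) := Real.sqrt_pos.mpr hs2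
      have h11 : 0 < Real.sqrt (((n:ℝ) - 1) / 2) * Real.Gamma (((n:ℝ) - 1) / 2)
          / Real.Gamma ((n:ℝ)/2) := by positivity
      linarith
    positivity
  rw [hμev]
  refine ENNReal.toReal_le_of_le_ofReal hRHS ?_
  refine le_trans hchain ?_
  refine ENNReal.ofReal_le_ofReal ?_
  rw [hCdef, hadef]
  exact sz_const_bound hn ht
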